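/- Let p be a prime and r ≥ 1. Let R be the quotient of the polynomial ring ℤ[v₀, v₁, v₂, …] by the ideal generated by the elements v_i^p − p·v_{i+1} (for all i ≥ 0) together with p^r·v₀. Grade R by assigning v_i the weight p^i. Then for each i ≥ 0 the homogeneous component of R of weight p^i is a cyclic group of order p^{r+i}, generated by the image of v_i. -/

import Mathlib

open MvPolynomial



namespace Stmt8Aux



/-- `e p j = 1 + p + ⋯ + p^(j-1)`. -/
def e (p j : ℕ) : ℕ := ∑ k ∈ Finset.range j, p ^ k

/-- `V p d = v_p(d!)`. -/
def V (p d : ℕ) : ℕ := padicValNat p (Nat.factorial d)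

/-- The span of `p^(-A)` inside `ℚ`, as a `ℤ`-submodule. -/
def pSpan (p A : ℕ) : Submodule ℤ ℚ := Submodule.span ℤ {((p : ℚ) ^ A)⁻¹}

/-- The map `ℤ[X₀,X₁,…] → ℚ[y]`, `Xⱼ ↦ y^(pʲ)/p^(e p j)`. -/
noncomputable def Φ (p : ℕ) : MvPolynomial ℕ ℤ →+* Polynomial ℚ :=
  eval₂Hom ((Polynomial.C : ℚ →+* Polynomial ℚ).comp (Int.castRingHom ℚ))
    (fun j => Polynomial.C (((p : ℚ) ^ e p j)⁻¹) * Polynomial.X ^ (p ^ j))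

/-- All coefficients of `g` lie in the corresponding spans. -/
def InA (p : ℕ) (g : Polynomial ℚ) : Prop := ∀ d, g.coeff d ∈ pSpan p (V p d)

/-- The target submodule for the ideal-killing functional. -/
def Mspan (p r i : ℕ) : Submodule ℤ ℚ :=
  Submodule.span ℤ {(p : ℚ) ^ r * ((p : ℚ) ^ (e p i - i))⁻¹}

lemma e_zero (p : ℕ) : e p 0 = 0 := by simp [e]

lemma e_succ (p j : ℕ) : e p (j + 1) = p * e p j + 1 := by
  simp only [e, Finset.sum_range_succ']
  rw [Finset.mul_sum]
  simp [pow_succ, mul_comm, add_comm]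

lemma le_e (p : ℕ) (hp : 1 ≤ p) (i : ℕ) : i ≤ e p i := by
  calc i = ∑ _k ∈ Finset.range i, 1 := by simp
  _ ≤ e p i := Finset.sum_le_sum fun k _ => Nat.one_le_pow _ _ hp

lemma V_zero (p : ℕ) : V p 0 = 0 := by simp [V]

lemma V_add_le (p : ℕ) (hp : p.Prime) (a b : ℕ) : V p a + V p b ≤ V p (a + b) := by
  haveI : Fact p.Prime := ⟨hp⟩
  simp only [V]
  rw [← padicValNat_dvd_iff_le (Nat.factorial_ne_zero _)]
  calc p ^ (padicValNat p a.factorial + padicValNat p b.factorial)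
      = p ^ padicValNat p a.factorial * p ^ padicValNat p b.factorial := pow_add _ _ _
  _ ∣ a.factorial * b.factorial :=
      mul_dvd_mul pow_padicValNat_dvd pow_padicValNat_dvd
  _ ∣ (a + b).factorial := Nat.factorial_mul_factorial_dvd_factorial_add a b

lemma V_pow (p : ℕ) (hp : p.Prime) (j : ℕ) : V p (p ^ j) = e p j := by
  haveI : Fact p.Prime := ⟨hp⟩
  rw [V, padicValNat_factorial (b := j + 1)
    (by rw [Nat.log_pow hp.one_lt]; omega)]
  rw [Finset.sum_Ico_eq_sum_range]
  simp only [Nat.add_sub_cancel]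
  rw [← Finset.sum_range_reflect]
  apply Finset.sum_congr rfl
  intro k hk
  simp only [Finset.mem_range] at hk
  rw [Nat.pow_div (by omega) hp.pos]
  congr 1
  omega

lemma V_pred (p : ℕ) (hp : p.Prime) (i : ℕ) : V p (p ^ i - 1) = e p i - i := by
  haveI : Fact p.Prime := ⟨hp⟩
  rcases Nat.eq_zero_or_pos i with rfl | hi
  · simp [V, e]
  obtain ⟨n, rfl⟩ : ∃ n, i = n + 1 := ⟨i - 1, by omega⟩
  have hp1 : 1 < p := hp.one_lt
  have hpi : 1 < p ^ (n + 1) := Nat.one_lt_pow (by omega) hp1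
  rw [V, padicValNat_factorial (b := n + 1)
    (Nat.log_lt_of_lt_pow (by omega) (by omega))]
  have hterm : ∀ k, 1 ≤ k → k ≤ n + 1 → (p ^ (n + 1) - 1) / p ^ k = p ^ (n + 1 - k) - 1 := by
    intro k h1 h2
    have h3 : p ^ k * p ^ (n + 1 - k) = p ^ (n + 1) := by
      rw [← pow_add]; congr 1; omega
    have h4 : 1 ≤ p ^ k := Nat.one_le_pow _ _ (by omega)
    have h5 : 1 ≤ p ^ (n + 1 - k) := Nat.one_le_pow _ _ (by omega)
    have hsplit : p ^ (n + 1) - 1 = p ^ k * (p ^ (n + 1 - k) - 1) + (p ^ k - 1) := by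
      have h6 : p ^ k ≤ p ^ (n + 1) := Nat.pow_le_pow_right (by omega) (by omega)
      rw [Nat.mul_sub, h3]
      omega
    rw [hsplit, Nat.mul_add_div (by omega), Nat.div_eq_of_lt (by omega), add_zero]
  rw [Finset.sum_congr rfl (fun k hk => by
    simp only [Finset.mem_Ico] at hk
    exact hterm k hk.1 (by omega))]
  rw [Finset.sum_Ico_eq_sum_range]
  simp only [Nat.add_sub_cancel]
  have : ∀ m, m ∈ Finset.range n → p ^ (n + 1 - (1 + m)) - 1 = p ^ ((n - 1 - m) + 1) - 1 := by
    intro m hm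
    simp only [Finset.mem_range] at hm
    congr 2
    omega
  rw [Finset.sum_congr rfl this, Finset.sum_range_reflect (fun m => p ^ (m + 1) - 1) n]
  have key : ∀ m, (∑ k ∈ Finset.range m, (p ^ (k + 1) - 1)) = e p (m + 1) - (m + 1) := by
    intro m
    induction m with
    | zero => simp [e]
    | succ m ih =>
      rw [Finset.sum_range_succ, ih]
      have h1 : 1 ≤ p ^ (m + 1) := Nat.one_le_pow _ _ (by omega)
      have h2 : m + 1 ≤ e p (m + 1) := le_e p (by omega) _
      have h3 : e p (m + 1 + 1) = e p (m + 1) + p ^ (m + 1) := by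
        simp [e, Finset.sum_range_succ]
      omega
  exact key n

lemma mem_pSpan_iff {p A : ℕ} {x : ℚ} :
    x ∈ pSpan p A ↔ ∃ c : ℤ, x = c * ((p : ℚ) ^ A)⁻¹ := by
  simp only [pSpan, Submodule.mem_span_singleton]
  constructor
  · rintro ⟨c, rfl⟩; exact ⟨c, by rw [zsmul_eq_mul]⟩
  · rintro ⟨c, rfl⟩; exact ⟨c, by rw [zsmul_eq_mul]⟩

lemma inv_pow_mem_pSpan {p A B : ℕ} (hp : 0 < p) (h : A ≤ B) :
    ((p : ℚ) ^ A)⁻¹ ∈ pSpan p B := by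
  rw [mem_pSpan_iff]
  refine ⟨(p : ℤ) ^ (B - A), ?_⟩
  have hpne : (p : ℚ) ≠ 0 := by positivity
  have hpow : (p : ℚ) ^ (B - A) * (p : ℚ) ^ A = (p : ℚ) ^ B := by
    rw [← pow_add]; congr 1; omega
  push_cast
  field_simp
  linarith [hpow]

lemma Φ_C (p : ℕ) (a : ℤ) : Φ p (C a) = Polynomial.C ((a : ℚ)) := by
  simp [Φ]

lemma Φ_X (p : ℕ) (j : ℕ) :
    Φ p (X j) = Polynomial.C (((p : ℚ) ^ e p j)⁻¹) * Polynomial.X ^ (p ^ j) := by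
  simp [Φ]

lemma InA_add {p : ℕ} {g h : Polynomial ℚ} (hg : InA p g) (hh : InA p h) :
    InA p (g + h) := fun d => by
  rw [Polynomial.coeff_add]; exact Submodule.add_mem _ (hg d) (hh d)

lemma InA_intC {p : ℕ} (a : ℤ) : InA p (Polynomial.C ((a : ℚ))) := by
  intro d
  rw [Polynomial.coeff_C]
  split_ifs with h
  · subst h
    rw [mem_pSpan_iff]
    exact ⟨a, by rw [V_zero]; simp⟩
  · exact Submodule.zero_mem _

lemma InA_mul {p : ℕ} (hp : p.Prime) {g h : Polynomial ℚ} (hg : InA p g) (hh : InA p h) :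
    InA p (g * h) := by
  intro d
  rw [Polynomial.coeff_mul]
  refine Submodule.sum_mem _ ?_
  rintro ⟨a, b⟩ hab
  have hab' : a + b = d := Finset.HasAntidiagonal.mem_antidiagonal.mp hab
  obtain ⟨c1, hc1⟩ := mem_pSpan_iff.mp (hg a)
  obtain ⟨c2, hc2⟩ := mem_pSpan_iff.mp (hh b)
  have : g.coeff a * h.coeff b = (c1 * c2 : ℤ) • ((p : ℚ) ^ (V p a + V p b))⁻¹ := by
    rw [hc1, hc2, zsmul_eq_mul, pow_add, mul_inv]
    push_cast
    ring
  rw [this]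
  refine Submodule.smul_mem _ _ ?_
  have := V_add_le p hp a b
  rw [← hab']
  exact inv_pow_mem_pSpan hp.pos (by omega)

lemma InA_X (p : ℕ) (hp : p.Prime) (j : ℕ) : InA p (Φ p (X j)) := by
  rw [Φ_X]
  intro d
  rw [Polynomial.coeff_C_mul, Polynomial.coeff_X_pow]
  split_ifs with h
  · subst h
    rw [mul_one]
    exact inv_pow_mem_pSpan hp.pos (le_of_eq (V_pow p hp j).symm)
  · rw [mul_zero]; exact Submodule.zero_mem _

lemma InA_Φ (p : ℕ) (hp : p.Prime) (f : MvPolynomial ℕ ℤ) : InA p (Φ p f) := by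
  induction f using MvPolynomial.induction_on with
  | C a => rw [Φ_C]; exact InA_intC a
  | add f g hf hg => rw [map_add]; exact InA_add hf hg
  | mul_X f j hf => rw [map_mul]; exact InA_mul hp hf (InA_X p hp j)

lemma Φ_gen1 (p : ℕ) (hp : p.Prime) (j : ℕ) :
    Φ p (X j ^ p - C ((p : ℕ) : ℤ) * X (j + 1)) = 0 := by
  have hpne : (p : ℚ) ≠ 0 := by
    simpa using hp.ne_zero
  rw [map_sub, map_pow, map_mul, Φ_C, Φ_X, Φ_X]
  rw [mul_pow, ← Polynomial.C_pow, ← pow_mul, ← mul_assoc, ← Polynomial.C_mul]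
  rw [sub_eq_zero, ← pow_succ]
  congr 2
  rw [e_succ, inv_pow, ← pow_mul]
  have h1 : (p : ℚ) ^ (p * e p j + 1) = (p : ℚ) ^ (e p j * p) * (p : ℚ) := by
    rw [pow_succ]; ring_nf
  rw [h1]
  have h2 : ((p:ℚ) ^ (e p j * p)) ≠ 0 := by positivity
  field_simp
  norm_cast

lemma key_mem (p : ℕ) (hp : p.Prime) (r i : ℕ)
    {x : MvPolynomial ℕ ℤ}
    (hx : x ∈ Ideal.span
      (Set.range (fun j => X j ^ p - C ((p : ℕ) : ℤ) * X (j + 1)) ∪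
        {C (((p : ℕ) : ℤ) ^ r) * X 0})) :
    (Φ p x).coeff (p ^ i) ∈ Mspan p r i := by
  have hpos : 1 ≤ p ^ i := Nat.one_le_pow _ _ hp.pos
  have main : ∀ f : MvPolynomial ℕ ℤ, (Φ p (f * x)).coeff (p ^ i) ∈ Mspan p r i := by
    refine Submodule.span_induction
      (p := fun x _ => ∀ f : MvPolynomial ℕ ℤ, (Φ p (f * x)).coeff (p ^ i) ∈ Mspan p r i)
      ?_ ?_ ?_ ?_ hx
    · rintro s (⟨j, rfl⟩ | rfl) f
      · rw [map_mul, Φ_gen1 p hp j, mul_zero, Polynomial.coeff_zero]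
        exact Submodule.zero_mem _
      · rw [map_mul, map_mul, Φ_C, Φ_X]
        have h0 : e p 0 = 0 := e_zero p
        have hX : Φ p f * (Polynomial.C ((((p:ℕ):ℤ) ^ r : ℤ) : ℚ) *
            (Polynomial.C (((p : ℚ) ^ e p 0)⁻¹) * Polynomial.X ^ p ^ 0)) =
            Polynomial.C ((p : ℚ) ^ r) * (Φ p f * Polynomial.X) := by
          rw [h0]
          push_cast
          simp only [pow_zero, pow_one, inv_one, Polynomial.C_1, one_mul, mul_one]
          ring
        rw [hX, Polynomial.coeff_C_mul]
        have hco : (Φ p f * Polynomial.X).coeff (p ^ i) = (Φ p f).coeff (p ^ i - 1) := by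
          rw [show p ^ i = (p ^ i - 1) + 1 by omega, Polynomial.coeff_mul_X]
          congr 1
        rw [hco]
        obtain ⟨c, hc⟩ := mem_pSpan_iff.mp (InA_Φ p hp f (p ^ i - 1))
        rw [hc, V_pred p hp i]
        have : (p : ℚ) ^ r * (c * ((p:ℚ) ^ (e p i - i))⁻¹)
            = c • ((p : ℚ) ^ r * ((p:ℚ) ^ (e p i - i))⁻¹) := by
          rw [zsmul_eq_mul]; ring
        rw [this]
        exact Submodule.smul_mem _ _ (Submodule.mem_span_singleton_self _)
    · intro f
      rw [mul_zero, map_zero, Polynomial.coeff_zero]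
      exact Submodule.zero_mem _
    · intro a b _ _ ha hb f
      rw [mul_add, map_add, Polynomial.coeff_add]
      exact Submodule.add_mem _ (ha f) (hb f)
    · intro a y _ hy f
      rw [smul_eq_mul, show f * (a * y) = (f * a) * y by ring]
      exact hy (f * a)
  simpa using main 1

lemma weight_eq_sum (p : ℕ) (a : ℕ →₀ ℕ) :
    Finsupp.weight (fun j => p ^ j) a = ∑ j ∈ a.support, a j * p ^ j := by
  rw [Finsupp.weight_apply, Finsupp.sum]
  exact Finset.sum_congr rfl fun j _ => by rw [smul_eq_mul]

lemma U_lemma (p : ℕ) (hp : p.Prime) (i : ℕ) {a : ℕ →₀ ℕ}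
    (hlt : ∀ j, a j < p)
    (hw : Finsupp.weight (fun j => p ^ j) a = p ^ i) :
    a = Finsupp.single i 1 := by
  have hp2 : 2 ≤ p := hp.two_le
  rw [weight_eq_sum] at hw
  have hane : a ≠ 0 := by
    rintro rfl
    simp at hw
    have : 1 ≤ p ^ i := Nat.one_le_pow _ _ (by omega)
    omega
  have hsupp : a.support.Nonempty := Finsupp.support_nonempty_iff.mpr hane
  obtain ⟨j0, hj0def⟩ : ∃ j0, j0 = a.support.min' hsupp := ⟨_, rfl⟩
  have hj0mem : j0 ∈ a.support := by rw [hj0def]; exact a.support.min'_mem hsupp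
  have hj0pos : 0 < a j0 := Nat.pos_of_ne_zero (Finsupp.mem_support_iff.mp hj0mem)
  have hmin : ∀ j ∈ a.support, j0 ≤ j := fun j hj => by
    rw [hj0def]; exact a.support.min'_le j hj
  have hsplit : a j0 * p ^ j0 + ∑ j ∈ a.support.erase j0, a j * p ^ j = p ^ i := by
    have h := Finset.add_sum_erase a.support (fun j => a j * p ^ j) hj0mem
    omega
  have hdvd : p ^ (j0 + 1) ∣ ∑ j ∈ a.support.erase j0, a j * p ^ j := by
    refine Finset.dvd_sum fun j hj => ?_
    have hjmem := Finset.mem_of_mem_erase hj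
    have hjne := Finset.ne_of_mem_erase hj
    have : j0 + 1 ≤ j := lt_of_le_of_ne (hmin j hjmem) (Ne.symm hjne)
    exact Dvd.dvd.mul_left (pow_dvd_pow p this) _
  -- j0 ≤ i
  have hj0i : j0 ≤ i := by
    have : p ^ j0 ∣ p ^ i := by
      rw [← hsplit]
      refine dvd_add (Dvd.dvd.mul_left dvd_rfl _) ?_
      exact dvd_trans (pow_dvd_pow p (by omega)) hdvd
    exact (Nat.pow_dvd_pow_iff_le_right hp.one_lt).mp this
  -- ¬ j0 < i
  have hj0eq : j0 = i := by
    by_contra hne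
    have hlt' : j0 < i := lt_of_le_of_ne hj0i hne
    have h1 : p ^ (j0 + 1) ∣ p ^ i := pow_dvd_pow p (by omega)
    have h2 : p ^ (j0 + 1) ∣ a j0 * p ^ j0 := by
      obtain ⟨K, hK⟩ := hdvd
      refine ⟨(p ^ i / p ^ (j0 + 1)) - K, ?_⟩
      obtain ⟨L, hL⟩ := h1
      rw [hL, Nat.mul_div_cancel_left _ (by positivity)]
      rw [hL, hK] at hsplit
      rw [Nat.mul_sub]
      omega
    have h3 : p ∣ a j0 := by
      obtain ⟨K, hK⟩ := h2
      have hK' : a j0 * p ^ j0 = (p * K) * p ^ j0 := by rw [hK, pow_succ]; ring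
      have := Nat.eq_of_mul_eq_mul_right (show 0 < p ^ j0 by positivity) hK'
      exact ⟨K, this⟩
    have := Nat.le_of_dvd hj0pos h3
    have := hlt j0
    omega
  subst hj0eq
  -- erase is empty
  have herase : a.support.erase j0 = ∅ := by
    by_contra hne
    obtain ⟨j, hj⟩ := Finset.nonempty_of_ne_empty hne
    have hjmem := Finset.mem_of_mem_erase hj
    have hjne := Finset.ne_of_mem_erase hj
    have hj1 : j0 + 1 ≤ j := lt_of_le_of_ne (hmin j hjmem) (Ne.symm hjne)
    have hterm : p ^ (j0 + 1) ≤ a j * p ^ j := by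
      calc p ^ (j0 + 1) ≤ p ^ j := Nat.pow_le_pow_right (by omega) hj1
      _ ≤ a j * p ^ j := Nat.le_mul_of_pos_left _
          (Nat.pos_of_ne_zero (Finsupp.mem_support_iff.mp hjmem))
    have hsum : p ^ (j0 + 1) ≤ ∑ j ∈ a.support.erase j0, a j * p ^ j :=
      le_trans hterm (Finset.single_le_sum (f := fun j => a j * p ^ j) (fun k _ => Nat.zero_le _) hj)
    have h1 : p ^ j0 ≤ a j0 * p ^ j0 := Nat.le_mul_of_pos_left _ hj0pos
    have h4 : 1 ≤ p ^ (j0 + 1) := Nat.one_le_pow _ _ (by omega)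
    omega
  have hsub : a.support ⊆ {j0} := by
    intro j hj
    rcases eq_or_ne j j0 with rfl | hne
    · exact Finset.mem_singleton_self _
    · exact absurd (Finset.mem_erase.mpr ⟨hne, hj⟩) (by rw [herase]; simp)
  have haj0 : a j0 = 1 := by
    have : ∑ j ∈ a.support.erase j0, a j * p ^ j = 0 := by rw [herase]; simp
    rw [this, add_zero] at hsplit
    have hpos : 0 < p ^ j0 := by positivity
    have := Nat.eq_of_mul_eq_mul_right hpos
      (show a j0 * p ^ j0 = 1 * p ^ j0 by rw [hsplit, one_mul])
    omega
  exact Finsupp.eq_single_iff.mpr ⟨hsub, haj0⟩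

lemma weight_single (w : ℕ → ℕ) (m c : ℕ) :
    Finsupp.weight w (Finsupp.single m c) = c * w m := by
  rw [Finsupp.weight_apply, Finsupp.sum_single_index (by simp)]
  rw [smul_eq_mul]

/-- reduction of a monomial of weight `p^i` to a multiple of `X i` in the quotient -/
lemma red (p : ℕ) (hp : p.Prime) (r : ℕ) (I : Ideal (MvPolynomial ℕ ℤ))
    (hI : I = Ideal.span
      (Set.range (fun j => X j ^ p - C (p : ℤ) * X (j + 1)) ∪
        {C ((p : ℤ) ^ r) * X 0})) (i : ℕ) :
    ∀ (n : ℕ) (a : ℕ →₀ ℕ), Finsupp.weight (fun _ => 1) a ≤ n →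
      Finsupp.weight (fun j => p ^ j) a = p ^ i →
      Ideal.Quotient.mk I (monomial a 1) ∈
        AddSubgroup.zmultiples (Ideal.Quotient.mk I (X i)) := by
  have hp2 : 2 ≤ p := hp.two_le
  intro n
  induction n with
  | zero =>
    intro a hdeg hw
    exfalso
    have ha0 : a = 0 := by
      ext j
      have h1 := Finsupp.le_weight (fun _ => 1) (s := j) one_ne_zero a
      simp only [Finsupp.coe_zero, Pi.zero_apply]
      omega
    subst ha0
    rw [map_zero] at hw
    have : 1 ≤ p ^ i := Nat.one_le_pow _ _ (by omega)
    omega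
  | succ n ih =>
    intro a hdeg hw
    by_cases hall : ∀ j, a j < p
    · rw [U_lemma p hp i hall hw, ← X_pow_eq_monomial, pow_one]
      exact AddSubgroup.mem_zmultiples _
    · push_neg at hall
      obtain ⟨j, hj⟩ := hall
      obtain ⟨b, hbdef⟩ : ∃ b, b = a - Finsupp.single j p := ⟨_, rfl⟩
      have hab : a = b + Finsupp.single j p := by
        rw [hbdef, tsub_add_cancel_of_le (Finsupp.single_le_iff.mpr hj)]
      have hgen : X j ^ p - C (p : ℤ) * X (j + 1) ∈ I := by
        rw [hI]; exact Ideal.subset_span (Or.inl ⟨j, rfl⟩)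
      have hmono : monomial a (1 : ℤ) = monomial b 1 * X j ^ p := by
        rw [hab, X_pow_eq_monomial, monomial_mul, mul_one]
      have step1 : Ideal.Quotient.mk I (monomial a 1) =
          Ideal.Quotient.mk I (monomial b 1 * (C (p : ℤ) * X (j + 1))) := by
        rw [Ideal.Quotient.eq, hmono, ← mul_sub]
        exact I.mul_mem_left _ hgen
      have step2 : monomial b (1 : ℤ) * (C (p : ℤ) * X (j + 1)) =
          C (p : ℤ) * monomial (b + Finsupp.single (j + 1) 1) 1 := by
        have hX1 : (X (j + 1) : MvPolynomial ℕ ℤ) = monomial (Finsupp.single (j + 1) 1) 1 := by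
          rw [← pow_one (X (j + 1) : MvPolynomial ℕ ℤ), X_pow_eq_monomial]
        rw [hX1, mul_left_comm, monomial_mul, mul_one]
      have hwa : Finsupp.weight (fun k => p ^ k) a
          = Finsupp.weight (fun k => p ^ k) b + p ^ (j + 1) := by
        rw [hab, map_add, weight_single]
        rw [pow_succ']
      have hwa' : Finsupp.weight (fun k => p ^ k) (b + Finsupp.single (j + 1) 1) = p ^ i := by
        rw [map_add, weight_single, one_mul]
        omega
      have hda : Finsupp.weight (fun _ => (1:ℕ)) a
          = Finsupp.weight (fun _ => (1:ℕ)) b + p := by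
        rw [hab, map_add, weight_single, mul_one]
      have hda' : Finsupp.weight (fun _ => (1:ℕ)) (b + Finsupp.single (j + 1) 1) ≤ n := by
        rw [map_add, weight_single]
        simp only [one_mul, mul_one]
        omega
      have hmem := ih (b + Finsupp.single (j + 1) 1) hda' hwa'
      rw [step1, step2, C_mul', map_zsmul]
      exact AddSubgroup.zsmul_mem _ hmem _

lemma pow_mem (p : ℕ) (hp : p.Prime) (r : ℕ) (I : Ideal (MvPolynomial ℕ ℤ))
    (hI : I = Ideal.span
      (Set.range (fun j => X j ^ p - C (p : ℤ) * X (j + 1)) ∪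
        {C ((p : ℤ) ^ r) * X 0})) :
    ∀ i, C ((p : ℤ) ^ (r + i)) * X i ∈ I := by
  intro i
  induction i with
  | zero =>
    rw [add_zero, hI]
    exact Ideal.subset_span (Or.inr rfl)
  | succ i ihp =>
    have hgen : X i ^ p - C (p : ℤ) * X (i + 1) ∈ I := by
      rw [hI]; exact Ideal.subset_span (Or.inl ⟨i, rfl⟩)
    have hXp : (X i : MvPolynomial ℕ ℤ) ^ p = X i ^ (p - 1) * X i := by
      conv_lhs => rw [show p = (p - 1) + 1 by have := hp.pos; omega]
      rw [pow_succ]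
    have heq : C ((p : ℤ) ^ (r + (i + 1))) * X (i + 1)
        = (C ((p : ℤ) ^ (r + i)) * X i) * X i ^ (p - 1)
          - C ((p : ℤ) ^ (r + i)) * (X i ^ p - C (p : ℤ) * X (i + 1)) := by
      rw [hXp, show r + (i + 1) = (r + i) + 1 by omega, pow_succ, C_mul]
      ring
    rw [heq]
    exact Ideal.sub_mem _ (Ideal.mul_mem_right _ _ ihp) (Ideal.mul_mem_left _ _ hgen)

end Stmt8Aux



open Stmt8Aux

/-- Theorem 2.14(f) (abstract ring): in the quotient of `ℤ[v₀, v₁, …]` by the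
relations `vᵢ^p = p·vᵢ₊₁` and `p^r·v₀ = 0`, graded by giving `vᵢ` weight `p^i`,
the homogeneous component of weight `p^i` is cyclic of order `p^{r+i}`,
generated by the image of `vᵢ`. -/
theorem stmt8 (p : ℕ) (hp : p.Prime) (r : ℕ) (hr : 1 ≤ r)
    (I : Ideal (MvPolynomial ℕ ℤ))
    (hI : I = Ideal.span
      (Set.range (fun i => X i ^ p - C (p : ℤ) * X (i + 1)) ∪
        {C ((p : ℤ) ^ r) * X 0}))
    (i : ℕ) :
    AddSubgroup.map (Ideal.Quotient.mk I).toAddMonoidHom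
        ((weightedHomogeneousSubmodule ℤ (fun j => p ^ j) (p ^ i)).toAddSubgroup)
      = AddSubgroup.zmultiples (Ideal.Quotient.mk I (X i)) ∧
    addOrderOf (Ideal.Quotient.mk I (X i)) = p ^ (r + i) := by
  haveI : Fact p.Prime := ⟨hp⟩
  have hp2 : 2 ≤ p := hp.two_le
  constructor
  · apply le_antisymm
    · rintro x ⟨f, hf, rfl⟩
      have hf' : IsWeightedHomogeneous (fun j => p ^ j) f ((p : ℕ) ^ i) := hf
      show Ideal.Quotient.mk I f ∈ AddSubgroup.zmultiples (Ideal.Quotient.mk I (X i))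
      have hsum : Ideal.Quotient.mk I f =
          ∑ v ∈ f.support, (coeff v f) • Ideal.Quotient.mk I (monomial v 1) := by
        conv_lhs => rw [f.as_sum]
        rw [map_sum]
        refine Finset.sum_congr rfl fun v hv => ?_
        rw [show monomial v (coeff v f) = C (coeff v f) * monomial v 1 by
          rw [C_mul_monomial, mul_one], C_mul', map_zsmul]
      rw [hsum]
      refine sum_mem fun v hv => AddSubgroup.zsmul_mem _ ?_ _
      exact red p hp r I hI i (Finsupp.weight (fun _ => 1) v) v le_rfl
        (hf' (mem_support_iff.mp hv))
    · rw [AddSubgroup.zmultiples_le]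
      exact ⟨X i, isWeightedHomogeneous_X ℤ _ i, rfl⟩
  · have hcast : ∀ m : ℕ, ((p ^ m : ℕ) : MvPolynomial ℕ ℤ) = C ((p : ℤ) ^ m) := by
      intro m
      rw [← C_eq_coe_nat]
      congr 1
    have hfin' : (p ^ (r + i)) • Ideal.Quotient.mk I (X i) = 0 := by
      rw [← map_nsmul, nsmul_eq_mul, Ideal.Quotient.eq_zero_iff_mem, hcast]
      exact pow_mem p hp r I hI i
    have hnot : ¬ (p ^ (r + i - 1)) • Ideal.Quotient.mk I (X i) = 0 := by
      intro h
      rw [← map_nsmul, nsmul_eq_mul, Ideal.Quotient.eq_zero_iff_mem, hcast, hI] at h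
      have hkey := key_mem p hp r i h
      have hco : (Φ p (C ((p : ℤ) ^ (r + i - 1)) * X i)).coeff (p ^ i)
          = (p : ℚ) ^ (r + i - 1) * ((p : ℚ) ^ e p i)⁻¹ := by
        rw [map_mul, Φ_C, Φ_X]
        rw [← mul_assoc, ← Polynomial.C_mul, Polynomial.coeff_C_mul, Polynomial.coeff_X_pow]
        simp
      rw [hco] at hkey
      rw [Mspan, Submodule.mem_span_singleton] at hkey
      obtain ⟨c, hc2⟩ := hkey
      rw [zsmul_eq_mul] at hc2
      have hei : i ≤ e p i := le_e p (by omega) i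
      have hpne : (p : ℚ) ≠ 0 := by positivity
      have hsplit : (p : ℚ) ^ e p i = (p : ℚ) ^ (e p i - i) * (p : ℚ) ^ i := by
        rw [← pow_add]
        congr 1
        omega
      have hq : (c : ℚ) * (p : ℚ) ^ (r + i) = (p : ℚ) ^ (r + i - 1) := by
        have h1 : ((p : ℚ) ^ (e p i - i)) ≠ 0 := by positivity
        have h2 : ((p : ℚ) ^ e p i) ≠ 0 := by positivity
        have h3 : (c : ℚ) * ((p:ℚ)^r * ((p:ℚ)^(e p i - i))⁻¹) * (p:ℚ)^(e p i)
            = (p:ℚ)^(r+i-1) * ((p:ℚ)^(e p i))⁻¹ * (p:ℚ)^(e p i) := by rw [hc2]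
        rw [hsplit] at h3
        field_simp at h3
        have h4 : ((c:ℚ) * (p:ℚ)^r * (p:ℚ)^i) * (p:ℚ)^(e p i - i)
            = (p:ℚ)^(r+i-1) * (p:ℚ)^(e p i - i) := by linear_combination (p:ℚ)^(e p i - i) * h3
        have h5 := mul_right_cancel₀ h1 h4
        rw [pow_add]
        linear_combination h5
      have hZ : c * (p : ℤ) ^ (r + i) = (p : ℤ) ^ (r + i - 1) := by
        exact_mod_cast hq
      have hdvd : ((p : ℤ) ^ (r + i)) ∣ (p : ℤ) ^ (r + i - 1) := ⟨c, by linarith [hZ]⟩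
      have hle : (p : ℤ) ^ (r + i) ≤ (p : ℤ) ^ (r + i - 1) :=
        Int.le_of_dvd (by positivity) hdvd
      have hlt : (p : ℤ) ^ (r + i - 1) < (p : ℤ) ^ (r + i) := by
        apply pow_lt_pow_right₀
        · exact_mod_cast hp.one_lt
        · omega
      linarith
    rw [show r + i = (r + i - 1) + 1 by omega] at hfin' ⊢
    exact addOrderOf_eq_prime_pow hnot hfin'
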